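/- Let v ∈ C²([a,b]) with v'(a) = v'(b) = 0. Then ∫_a^b (-v'' - 6v' + 16v)(2v + v'' - 3v')² dx = ∫_a^b [-(v'')³ + 12(v'')²v - 48v²v'' + 64v³] dx - 72(v(b)³ - v(a)³). -/

import Mathlib

theorem h_g_sq_integral_minus (v : ℝ → ℝ) (a b : ℝ) (hab : a ≤ b)
    (hv : ContDiff ℝ 2 v) (ha : deriv v a = 0) (hb : deriv v b = 0) :
    ∫ x in a..b, (-(deriv (deriv v) x) - 6 * deriv v x + 16 * v x) *
        (2 * v x + deriv (deriv v) x - 3 * deriv v x) ^ 2 =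
      (∫ x in a..b, (-(deriv (deriv v) x) ^ 3 + 12 * (deriv (deriv v) x) ^ 2 * v x
          - 48 * v x ^ 2 * deriv (deriv v) x + 64 * v x ^ 3))
        - 72 * (v b ^ 3 - v a ^ 3) := by
  have h2' : ContDiff ℝ (1 + 1) v := by norm_num [hv]
  have h1 : ContDiff ℝ 1 (deriv v) := (contDiff_succ_iff_deriv.mp h2').2.2
  have hdiffv : Differentiable ℝ v := (contDiff_succ_iff_deriv.mp h2').1
  have hdiffp : Differentiable ℝ (deriv v) := (contDiff_one_iff_deriv.mp h1).1
  have cu : Continuous v := hv.continuous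
  have cp : Continuous (deriv v) := h1.continuous
  have cq : Continuous (deriv (deriv v)) := (contDiff_one_iff_deriv.mp h1).2
  have hd1 : ∀ x, HasDerivAt v (deriv v x) x := fun x => (hdiffv x).hasDerivAt
  have hd2 : ∀ x, HasDerivAt (deriv v) (deriv (deriv v) x) x :=
    fun x => (hdiffp x).hasDerivAt
  set D : ℝ → ℝ := fun x =>
    108 * v x ^ 2 * deriv (deriv v) x - 54 * (deriv v x) ^ 3
      + 27 * (deriv v x) ^ 2 * deriv (deriv v) x
      - 108 * v x * deriv v x * deriv (deriv v) x
      - 216 * v x ^ 2 * deriv v x + 216 * v x * (deriv v x) ^ 2 with hD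
  have hF : ∀ x, HasDerivAt
      (fun x => 9 * (deriv v x) ^ 3 - 54 * v x * (deriv v x) ^ 2
        + 108 * (v x) ^ 2 * deriv v x - 72 * (v x) ^ 3) (D x) x := by
    intro x
    have h1x := hd1 x
    have h2x := hd2 x
    have := ((((h2x.pow 3).const_mul (9:ℝ)).sub
        ((h1x.mul (h2x.pow 2)).const_mul (54:ℝ))).add
        (((h1x.pow 2).mul h2x).const_mul (108:ℝ))).sub
        ((h1x.pow 3).const_mul (72:ℝ))
    convert this using 1
    · rfl
    · rfl
    · funext y; simp only [Pi.sub_apply, Pi.add_apply, Pi.mul_apply, Pi.pow_apply]; ring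
    · rw [hD]; push_cast; simp only [Pi.mul_apply, Pi.pow_apply]; ring
  have hDint : IntervalIntegrable D MeasureTheory.volume a b := by
    apply Continuous.intervalIntegrable
    fun_prop
  have hRint : IntervalIntegrable (fun x =>
      -(deriv (deriv v) x) ^ 3 + 12 * (deriv (deriv v) x) ^ 2 * v x
        - 48 * v x ^ 2 * deriv (deriv v) x + 64 * v x ^ 3)
      MeasureTheory.volume a b := by
    apply Continuous.intervalIntegrable
    fun_prop
  have key : (∫ x in a..b, (-(deriv (deriv v) x) - 6 * deriv v x + 16 * v x) *
        (2 * v x + deriv (deriv v) x - 3 * deriv v x) ^ 2)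
      = (∫ x in a..b, ((-(deriv (deriv v) x) ^ 3 + 12 * (deriv (deriv v) x) ^ 2 * v x
          - 48 * v x ^ 2 * deriv (deriv v) x + 64 * v x ^ 3) + D x)) := by
    apply intervalIntegral.integral_congr
    intro x _
    rw [hD]
    ring
  rw [key, intervalIntegral.integral_add hRint hDint,
    intervalIntegral.integral_eq_sub_of_hasDerivAt (fun x _ => hF x) hDint]
  rw [ha, hb]
  ring
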